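/- arXiv:0906.1083 — 4 statements merged into one kernel-verified Lean document; each statement's English description precedes it below -/
import Mathlib

section
/- Let $R$ be a commutative ring of prime characteristic $p$ and let $I \subseteq R$ be an ideal. For all integers $a, b \geq 0$, the product of ideals $(I^{[p^a]} : I) \cdot \big((I^{[p^b]} : I)\big)^{[p^a]}$ is contained in $(I^{[p^{a+b}]} : I)$. -/
open Ideal

/-- For an ideal `I` in a commutative ring `R` of prime characteristic `p`,
`(I^[p^a] : I) * ((I^[p^b] : I))^[p^a] ⊆ (I^[p^(a+b)] : I)`, where `J^[p^c]` denotes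
the `c`-th Frobenius power of `J`, i.e. the extension of `J` along `r ↦ r^(p^c)`. -/
theorem frobenius_colon_mul
    (R : Type*) [CommRing R] (p : ℕ) [Fact p.Prime] [CharP R p]
    (I : Ideal R) (a b : ℕ) :
    ((I.map (iterateFrobenius R p a)).colon I) *
        (((I.map (iterateFrobenius R p b)).colon I).map (iterateFrobenius R p a)) ≤
      (I.map (iterateFrobenius R p (a + b))).colon I := by
  have hcolon : ∀ J : Ideal R, J.colon I * I ≤ J := by
    intro J
    rw [Ideal.mul_le]
    intro r hr i hi
    exact Submodule.mem_colon.mp hr i hi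
  have hkey : ((I.map (iterateFrobenius R p b)).colon I).map (iterateFrobenius R p a) *
      I.map (iterateFrobenius R p a) ≤ I.map (iterateFrobenius R p (a + b)) := by
    rw [← Ideal.map_mul, iterateFrobenius_add, ← Ideal.map_map]
    exact Ideal.map_mono (hcolon _)
  rw [Ideal.mul_le]
  intro x hx y hy
  rw [Submodule.mem_colon]
  intro i hi
  have hxi : x * i ∈ I.map (iterateFrobenius R p a) :=
    Submodule.mem_colon.mp hx i hi
  have : y * (x * i) ∈ I.map (iterateFrobenius R p (a + b)) :=
    hkey (Ideal.mul_mem_mul hy hxi)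
  simpa [smul_eq_mul, mul_assoc, mul_comm, mul_left_comm] using this
end

section
/- Let $\mathbb{K}$ be a field and let $R = \mathbb{K}[\![x, y, z]\!]$ be the formal power series ring in three variables. For every integer $q > 1$, the colon ideal $\big((x^q y^q, y^q z^q) : (x y, y z)\big)$ equals the ideal $(x^{q} y^{q-1}, \; x^{q-1} y^{q-1} z^{q-1}, \; y^{q-1} z^{q})$. -/
open MvPowerSeries Finsupp

section Aux

variable {K : Type*} [Field K]

/-- If all coefficients of `f` outside the "upper set" of `e` vanish, then the monomial
`monomial e 1` divides `f`. -/
lemma monomial_dvd_of_coeff (e : Fin 3 →₀ ℕ) (f : MvPowerSeries (Fin 3) K)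
    (h : ∀ d, ¬ e ≤ d → coeff (R := K) d f = 0) :
    ∃ g, f = monomial (R := K) e 1 * g := by
  refine ⟨show MvPowerSeries (Fin 3) K from fun d => f (d + e), ?_⟩
  ext d
  rw [coeff_monomial_mul]
  split_ifs with hd
  · rw [one_mul, coeff_apply]
    show f d = f (d - e + e)
    rw [tsub_add_cancel_of_le hd]
  · exact h d hd

lemma le_iff3 (u v : Fin 3 →₀ ℕ) : u ≤ v ↔ u 0 ≤ v 0 ∧ u 1 ≤ v 1 ∧ u 2 ≤ v 2 := by
  rw [Finsupp.le_def]
  constructor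
  · intro h; exact ⟨h 0, h 1, h 2⟩
  · rintro ⟨h0, h1, h2⟩ i
    fin_cases i <;> assumption

lemma mem_span_pair_monomial (e1 e2 : Fin 3 →₀ ℕ) (f : MvPowerSeries (Fin 3) K) :
    f ∈ Ideal.span {monomial (R := K) e1 1, monomial (R := K) e2 1} ↔
      ∀ d, coeff (R := K) d f ≠ 0 → e1 ≤ d ∨ e2 ≤ d := by
  constructor
  · intro h d hd
    rw [Ideal.mem_span_pair] at h
    obtain ⟨a, b, rfl⟩ := h
    by_contra hc
    push_neg at hc
    apply hd
    rw [map_add, coeff_mul_monomial, coeff_mul_monomial, if_neg hc.1, if_neg hc.2, add_zero]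
  · intro h
    classical
    set g1 : MvPowerSeries (Fin 3) K := fun d => if e1 ≤ d then coeff (R := K) d f else 0 with hg1
    have hc1 : ∀ d, coeff (R := K) d g1 = if e1 ≤ d then coeff (R := K) d f else 0 := fun d => rfl
    obtain ⟨u, hu⟩ := monomial_dvd_of_coeff e1 g1 (fun d hd => by rw [hc1, if_neg hd])
    obtain ⟨v, hv⟩ := monomial_dvd_of_coeff e2 (f - g1) (fun d hd => by
      rw [map_sub, hc1]
      split_ifs with h1
      · ring
      · rcases Classical.em (coeff (R := K) d f = 0) with h0 | h0
        · rw [h0]; ring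
        · rcases h d h0 with h' | h' <;> [exact absurd h' h1; exact absurd h' hd])
    rw [Ideal.mem_span_pair]
    refine ⟨u, v, ?_⟩
    rw [mul_comm u, mul_comm v, ← hu, ← hv]
    ring

lemma mem_span_triple_monomial (e1 e2 e3 : Fin 3 →₀ ℕ) (f : MvPowerSeries (Fin 3) K) :
    f ∈ Ideal.span {monomial (R := K) e1 1, monomial (R := K) e2 1, monomial (R := K) e3 1} ↔
      ∀ d, coeff (R := K) d f ≠ 0 → e1 ≤ d ∨ e2 ≤ d ∨ e3 ≤ d := by
  constructor
  · intro h d hd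
    rw [show ({monomial (R := K) e1 1, monomial (R := K) e2 1, monomial (R := K) e3 1} : Set (MvPowerSeries (Fin 3) K))
      = insert (monomial (R := K) e1 1) {monomial (R := K) e2 1, monomial (R := K) e3 1} from rfl,
      Ideal.span_insert, Submodule.mem_sup] at h
    obtain ⟨p, hp, r, hr, rfl⟩ := h
    rw [Ideal.mem_span_singleton] at hp
    obtain ⟨c, rfl⟩ := hp
    rw [map_add] at hd
    rcases Classical.em (coeff (R := K) d (monomial (R := K) e1 1 * c) = 0) with h0 | h0
    · rw [h0, zero_add] at hd
      rcases (mem_span_pair_monomial e2 e3 r).1 hr d hd with h' | h'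
      · exact Or.inr (Or.inl h')
      · exact Or.inr (Or.inr h')
    · left
      rw [mul_comm, coeff_mul_monomial] at h0
      by_contra hc
      rw [if_neg hc] at h0
      exact h0 rfl
  · intro h
    classical
    set g1 : MvPowerSeries (Fin 3) K := fun d => if e1 ≤ d then coeff (R := K) d f else 0 with hg1
    have hc1 : ∀ d, coeff (R := K) d g1 = if e1 ≤ d then coeff (R := K) d f else 0 := fun d => rfl
    obtain ⟨u, hu⟩ := monomial_dvd_of_coeff e1 g1 (fun d hd => by rw [hc1, if_neg hd])
    have hrest : f - g1 ∈ Ideal.span {monomial (R := K) e2 1, monomial (R := K) e3 1} := by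
      rw [mem_span_pair_monomial]
      intro d hd
      rw [map_sub, hc1] at hd
      split_ifs at hd with h1
      · simp at hd
      · rw [sub_zero] at hd
        rcases h d hd with h' | h' | h'
        · exact absurd h' h1
        · exact Or.inl h'
        · exact Or.inr h'
    have hmem1 : g1 ∈ Ideal.span {monomial (R := K) e1 1, monomial (R := K) e2 1, monomial (R := K) e3 1} := by
      rw [hu]
      exact Ideal.mul_mem_right _ _ (Ideal.subset_span (by simp))
    have hmem2 : f - g1 ∈ Ideal.span {monomial (R := K) e1 1, monomial (R := K) e2 1, monomial (R := K) e3 1} := by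
      refine Ideal.span_mono ?_ hrest
      intro m hm
      rcases hm with h' | h' <;> simp [h']
    have := Ideal.add_mem _ hmem1 hmem2
    rwa [add_sub_cancel] at this

lemma mul_monomial_mem_span_pair (e e1 e2 : Fin 3 →₀ ℕ) (f : MvPowerSeries (Fin 3) K) :
    f * monomial (R := K) e 1 ∈ Ideal.span {monomial (R := K) e1 1, monomial (R := K) e2 1} ↔
      ∀ d, coeff (R := K) d f ≠ 0 → e1 ≤ d + e ∨ e2 ≤ d + e := by
  rw [mem_span_pair_monomial]
  constructor
  · intro h d hd
    refine h (d + e) ?_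
    rwa [coeff_mul_monomial, if_pos le_add_self, add_tsub_cancel_right, mul_one]
  · intro h d hd
    rw [coeff_mul_monomial] at hd
    split_ifs at hd with he
    · rw [mul_one] at hd
      have := h (d - e) hd
      rwa [tsub_add_cancel_of_le he] at this
    · exact absurd rfl hd

end Aux

/-- In `R = K⟦x,y,z⟧`, for `q > 1`,
`((x^q y^q, y^q z^q) : (xy, yz)) = (x^q y^(q-1), x^(q-1) y^(q-1) z^(q-1), y^(q-1) z^q)`. -/
theorem colon_ideal_computation
    (K : Type*) [Field K] (q : ℕ) (hq : 1 < q)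
    (x y z : MvPowerSeries (Fin 3) K)
    (hx : x = X 0) (hy : y = X 1) (hz : z = X 2) :
    (Ideal.span {x ^ q * y ^ q, y ^ q * z ^ q}).colon (Ideal.span {x * y, y * z}) =
      Ideal.span {x ^ q * y ^ (q - 1), x ^ (q - 1) * y ^ (q - 1) * z ^ (q - 1),
        y ^ (q - 1) * z ^ q} := by
  subst hx hy hz
  have hmm : ∀ (a b : Fin 3 →₀ ℕ), monomial (R := K) a 1 * monomial (R := K) b 1 = monomial (R := K) (a + b) 1 := by
    intro a b; rw [monomial_mul_monomial, one_mul]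
  have h1 : (X 0 : MvPowerSeries (Fin 3) K) ^ q * X 1 ^ q
      = monomial (R := K) (single 0 q + single 1 q) 1 := by rw [X_pow_eq, X_pow_eq, hmm]
  have h2 : (X 1 : MvPowerSeries (Fin 3) K) ^ q * X 2 ^ q
      = monomial (R := K) (single 1 q + single 2 q) 1 := by rw [X_pow_eq, X_pow_eq, hmm]
  have h3 : (X 0 : MvPowerSeries (Fin 3) K) * X 1
      = monomial (R := K) (single 0 1 + single 1 1) 1 := by rw [X_def, X_def, hmm]
  have h4 : (X 1 : MvPowerSeries (Fin 3) K) * X 2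
      = monomial (R := K) (single 1 1 + single 2 1) 1 := by rw [X_def, X_def, hmm]
  have h5 : (X 0 : MvPowerSeries (Fin 3) K) ^ q * X 1 ^ (q - 1)
      = monomial (R := K) (single 0 q + single 1 (q - 1)) 1 := by rw [X_pow_eq, X_pow_eq, hmm]
  have h6 : (X 0 : MvPowerSeries (Fin 3) K) ^ (q - 1) * X 1 ^ (q - 1) * X 2 ^ (q - 1)
      = monomial (R := K) (single 0 (q - 1) + single 1 (q - 1) + single 2 (q - 1)) 1 := by
    rw [X_pow_eq, X_pow_eq, X_pow_eq, hmm, hmm]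
  have h7 : (X 1 : MvPowerSeries (Fin 3) K) ^ (q - 1) * X 2 ^ q
      = monomial (R := K) (single 1 (q - 1) + single 2 q) 1 := by rw [X_pow_eq, X_pow_eq, hmm]
  rw [h1, h2, h3, h4, h5, h6, h7]
  ext f
  have hcolon : f ∈ (Ideal.span {monomial (R := K) (single 0 q + single 1 q) 1,
        monomial (R := K) (single 1 q + single 2 q) 1}).colon
        (Ideal.span {monomial (R := K) (σ := Fin 3) (single 0 1 + single 1 1) 1,
          monomial (R := K) (σ := Fin 3) (single 1 1 + single 2 1) 1}) ↔
      f * monomial (R := K) (single 0 1 + single 1 1) 1 ∈ Ideal.span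
          {monomial (R := K) (single 0 q + single 1 q) 1, monomial (R := K) (single 1 q + single 2 q) 1} ∧
      f * monomial (R := K) (single 1 1 + single 2 1) 1 ∈ Ideal.span
          {monomial (R := K) (single 0 q + single 1 q) 1, monomial (R := K) (single 1 q + single 2 q) 1} := by
    constructor
    · intro h
      exact ⟨Submodule.mem_colon.1 h _ (Ideal.subset_span (by simp)),
        Submodule.mem_colon.1 h _ (Ideal.subset_span (by simp))⟩
    · rintro ⟨ha, hb⟩
      rw [Submodule.mem_colon]
      intro p hp
      rw [SetLike.mem_coe, Ideal.mem_span_pair] at hp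
      obtain ⟨a, b, rfl⟩ := hp
      have : f • (a * monomial (R := K) (single 0 1 + single 1 1) 1
          + b * monomial (R := K) (single 1 1 + single 2 1) 1)
          = a * (f * monomial (R := K) (single 0 1 + single 1 1) 1)
            + b * (f * monomial (R := K) (single 1 1 + single 2 1) 1) := by
        rw [smul_eq_mul]; ring
      rw [this]
      exact Ideal.add_mem _ (Ideal.mul_mem_left _ _ ha) (Ideal.mul_mem_left _ _ hb)
  rw [hcolon, mul_monomial_mem_span_pair, mul_monomial_mem_span_pair,
    mem_span_triple_monomial]
  constructor
  · rintro ⟨ha, hb⟩ d hd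
    have H1 := ha d hd
    have H2 := hb d hd
    rw [le_iff3, le_iff3] at H1 H2 ⊢
    rw [le_iff3]
    simp only [Finsupp.add_apply, Finsupp.single_apply] at H1 H2 ⊢
    simp only [Fin.isValue, show ((0:Fin 3) = 1) = False by simp,
      show ((0:Fin 3) = 2) = False by simp, show ((1:Fin 3) = 0) = False by simp,
      show ((1:Fin 3) = 2) = False by simp, show ((2:Fin 3) = 0) = False by simp,
      show ((2:Fin 3) = 1) = False by simp, if_true, if_false, ite_true, ite_false] at H1 H2 ⊢
    omega
  · intro h
    refine ⟨fun d hd => ?_, fun d hd => ?_⟩ <;>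
    · have H := h d hd
      rw [le_iff3, le_iff3, le_iff3] at H
      rw [le_iff3, le_iff3]
      simp only [Finsupp.add_apply, Finsupp.single_apply] at H ⊢
      simp only [Fin.isValue, show ((0:Fin 3) = 1) = False by simp,
        show ((0:Fin 3) = 2) = False by simp, show ((1:Fin 3) = 0) = False by simp,
        show ((1:Fin 3) = 2) = False by simp, show ((2:Fin 3) = 0) = False by simp,
        show ((2:Fin 3) = 1) = False by simp, if_true, if_false, ite_true, ite_false] at H ⊢
      omega
end

section
/- Let $\mathbb{K}$ be a field of prime characteristic $p$, let $R = \mathbb{K}[\![x, y, z]\!]$ be the formal power series ring in three variables, let $I = (xy, yz)$, and for $c \geq 1$ write $K_c = (I^{[p^c]} : I)$. Let $e \geq 1$, let $s \geq 2$, and let $\beta_1, \dots, \beta_s$ be integers with $1 \leq \beta_i < e$ for all $i$ and $\beta_1 + \dots + \beta_s = e$. Then $x^{p^e} y^{p^e - 1}$ does not belong to the product of ideals $K_{\beta_1} \cdot K_{\beta_2}^{[p^{\beta_1}]} \cdot K_{\beta_3}^{[p^{\beta_1 + \beta_2}]} \cdots K_{\beta_s}^{[p^{\beta_1 + \dots +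 \beta_{s-1}}]}$. -/
open MvPowerSeries

/-- A power series ring over a field of characteristic `p` has characteristic `p`. -/
instance mvPowerSeries_charP (K : Type*) [Field K] (p : ℕ) [CharP K p] (σ : Type*) :
    CharP (MvPowerSeries σ K) p :=
  charP_of_injective_algebraMap' K p

namespace NotMemProdKAux

variable {Fld : Type*} [Field Fld]

/-- The exponent vector `(a, b, c)` as a finitely supported function on `Fin 3`. -/
noncomputable def vec (a b c : ℕ) : Fin 3 →₀ ℕ :=
  Finsupp.single 0 a + Finsupp.single 1 b + Finsupp.single 2 c

@[simp] lemma vec_apply_zero (a b c : ℕ) : vec a b c 0 = a := by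
  simp [vec, Finsupp.single_apply]

@[simp] lemma vec_apply_one (a b c : ℕ) : vec a b c 1 = b := by
  simp [vec, Finsupp.single_apply]

@[simp] lemma vec_apply_two (a b c : ℕ) : vec a b c 2 = c := by
  simp [vec, Finsupp.single_apply]

lemma vec_le_iff {a b c : ℕ} {d : Fin 3 →₀ ℕ} :
    vec a b c ≤ d ↔ a ≤ d 0 ∧ b ≤ d 1 ∧ c ≤ d 2 := by
  rw [Finsupp.le_def]
  constructor
  · intro h
    exact ⟨by simpa using h 0, by simpa using h 1, by simpa using h 2⟩
  · rintro ⟨h0, h1, h2⟩ i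
    fin_cases i <;> simpa

/-- The ideal of power series all of whose monomials are divisible by some
exponent in `D`. -/
def suppIdeal (D : Set (Fin 3 →₀ ℕ)) : Ideal (MvPowerSeries (Fin 3) Fld) where
  carrier := {f | ∀ d, coeff d f ≠ 0 → ∃ a ∈ D, a ≤ d}
  zero_mem' := by intro d hd; simp at hd
  add_mem' := by
    intro f g hf hg d hd
    rw [map_add] at hd
    by_cases h : coeff d f = 0
    · exact hg d (by intro h'; exact hd (by rw [h, h', add_zero]))
    · exact hf d h
  smul_mem' := by
    intro r f hf d hd
    classical
    rw [smul_eq_mul, coeff_mul] at hd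
    obtain ⟨pq, hpq, hne⟩ := Finset.exists_ne_zero_of_sum_ne_zero hd
    obtain ⟨a, ha, hale⟩ := hf pq.2 (right_ne_zero_of_mul hne)
    refine ⟨a, ha, hale.trans ?_⟩
    rw [← Finset.HasAntidiagonal.mem_antidiagonal.mp hpq]
    exact le_add_self

lemma mem_suppIdeal_iff {D : Set (Fin 3 →₀ ℕ)} {f : MvPowerSeries (Fin 3) Fld} :
    f ∈ suppIdeal D ↔ ∀ d, coeff d f ≠ 0 → ∃ a ∈ D, a ≤ d := Iff.rfl

lemma monomial_mem_suppIdeal {D : Set (Fin 3 →₀ ℕ)} {n : Fin 3 →₀ ℕ} (hn : n ∈ D) (r : Fld) :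
    monomial n r ∈ (suppIdeal D : Ideal (MvPowerSeries (Fin 3) Fld)) := by
  rw [mem_suppIdeal_iff]
  intro d hd
  exact ⟨n, hn, (eq_of_coeff_monomial_ne_zero hd).ge⟩

end NotMemProdKAux
open MvPowerSeries NotMemProdKAux

namespace NotMemProdKAux

variable {Fld : Type*} [Field Fld]

/-- If `f * X^n` lies in `suppIdeal D`, then every exponent of `f`, shifted by `n`,
dominates some element of `D`. -/
lemma shift_bound {D : Set (Fin 3 →₀ ℕ)} {f : MvPowerSeries (Fin 3) Fld} {n : Fin 3 →₀ ℕ}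
    (h : f * monomial n 1 ∈ (suppIdeal D : Ideal (MvPowerSeries (Fin 3) Fld)))
    {d : Fin 3 →₀ ℕ} (hd : coeff d f ≠ 0) : ∃ a ∈ D, a ≤ d + n := by
  refine (mem_suppIdeal_iff.mp h) (d + n) ?_
  rw [coeff_add_mul_monomial, mul_one]
  exact hd

/-- Bounding a finite product of ideals each contained in a `suppIdeal`. -/
lemma prod_bound (A : ℕ → Ideal (MvPowerSeries (Fin 3) Fld)) (D : ℕ → Set (Fin 3 →₀ ℕ))
    (s : ℕ) (hA : ∀ i < s, A i ≤ suppIdeal (D i)) :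
    ∀ f ∈ ∏ i ∈ Finset.range s, A i, ∀ d, coeff d f ≠ 0 →
      ∃ a : ℕ → (Fin 3 →₀ ℕ), (∀ i < s, a i ∈ D i) ∧ ∑ i ∈ Finset.range s, a i ≤ d := by
  classical
  induction s with
  | zero =>
    clear hA
    intro f _ d _
    exact ⟨fun _ => 0, by intro i hi; omega, by simp⟩
  | succ n ih =>
    rw [Finset.prod_range_succ]
    intro f hf
    refine Submodule.mul_induction_on hf ?_ ?_
    · intro m hm g hg d hd
      rw [coeff_mul] at hd
      obtain ⟨pq, hpq, hne⟩ := Finset.exists_ne_zero_of_sum_ne_zero hd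
      obtain ⟨a, ha, hale⟩ := ih (fun i hi => hA i (hi.trans n.lt_succ_self)) m hm pq.1
        (left_ne_zero_of_mul hne)
      obtain ⟨b, hb, hble⟩ := (hA n n.lt_succ_self hg) pq.2 (right_ne_zero_of_mul hne)
      refine ⟨Function.update a n b, ?_, ?_⟩
      · intro i hi
        rcases Nat.lt_succ_iff_lt_or_eq.mp hi with hi' | rfl
        · rw [Function.update_of_ne (Nat.ne_of_lt hi')]
          exact ha i hi'
        · rw [Function.update_self]
          exact hb
      · rw [Finset.sum_range_succ]
        have hsame : ∑ i ∈ Finset.range n, Function.update a n b i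
            = ∑ i ∈ Finset.range n, a i :=
          Finset.sum_congr rfl fun i hi =>
            Function.update_of_ne (Nat.ne_of_lt (Finset.mem_range.mp hi)) _ _
        rw [hsame, Function.update_self, ← Finset.HasAntidiagonal.mem_antidiagonal.mp hpq]
        exact add_le_add hale hble
    · intro u v hu hv d hd
      rw [map_add] at hd
      by_cases h : coeff d u = 0
      · exact hv d (fun h' => hd (by rw [h, h', add_zero]))
      · exact hu d h

end NotMemProdKAux
namespace NotMemProdKAux

variable {Fld : Type*} [Field Fld]

lemma xy_pow (n : ℕ) :
    (X 0 * X 1 : MvPowerSeries (Fin 3) Fld) ^ n = monomial (vec n n 0) 1 := by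
  rw [mul_pow, X_pow_eq, X_pow_eq, monomial_mul_monomial, one_mul]
  congr 1
  simp [vec]

lemma yz_pow (n : ℕ) :
    (X 1 * X 2 : MvPowerSeries (Fin 3) Fld) ^ n = monomial (vec 0 n n) 1 := by
  rw [mul_pow, X_pow_eq, X_pow_eq, monomial_mul_monomial, one_mul]
  congr 1
  simp [vec, add_comm]

lemma x_pow_mul_y_pow (m n : ℕ) :
    (X 0 : MvPowerSeries (Fin 3) Fld) ^ m * (X 1) ^ n = monomial (vec m n 0) 1 := by
  rw [X_pow_eq, X_pow_eq, monomial_mul_monomial, one_mul]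
  congr 1
  simp [vec]

/-- The key per-factor bound : the image under `iterateFrobenius p γ` of the colon ideal
`(I^[p^c] : I)` is contained in an explicit monomial `suppIdeal`. -/
lemma mapK_bound (p : ℕ) [Fact p.Prime] [CharP Fld p] (c γ : ℕ) (hc : 1 ≤ c)
    (f : MvPowerSeries (Fin 3) Fld)
    (hf1 : f * (X 0 * X 1) ∈
      (Ideal.span {X 0 * X 1, X 1 * X 2} : Ideal (MvPowerSeries (Fin 3) Fld)).map
        (iterateFrobenius (MvPowerSeries (Fin 3) Fld) p c))
    (hf2 : f * (X 1 * X 2) ∈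
      (Ideal.span {X 0 * X 1, X 1 * X 2} : Ideal (MvPowerSeries (Fin 3) Fld)).map
        (iterateFrobenius (MvPowerSeries (Fin 3) Fld) p c)) :
    iterateFrobenius (MvPowerSeries (Fin 3) Fld) p γ f ∈
      (suppIdeal {vec (p ^ (γ + c)) (p ^ (γ + c) - p ^ γ) 0,
        vec (p ^ (γ + c) - p ^ γ) (p ^ (γ + c) - p ^ γ) (p ^ (γ + c) - p ^ γ),
        vec 0 (p ^ (γ + c) - p ^ γ) (p ^ (γ + c))} :
        Ideal (MvPowerSeries (Fin 3) Fld)) := by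
  set Q := p ^ γ with hQdef
  set P := p ^ (γ + c) with hPdef
  have hp : 2 ≤ p := (Fact.out : p.Prime).two_le
  have hQpos : 0 < Q := pow_pos (by omega) _
  have hPQ : Q * 2 ≤ P := by
    rw [hPdef, hQdef, pow_add]
    have : 2 ≤ p ^ c := le_trans hp (le_trans (pow_one p).ge (Nat.pow_le_pow_right (by omega) hc))
    exact Nat.mul_le_mul_left _ this
  set B : Set (Fin 3 →₀ ℕ) := {vec P P 0, vec 0 P P} with hB
  have hIB : (Ideal.span {X 0 * X 1, X 1 * X 2} :
      Ideal (MvPowerSeries (Fin 3) Fld)).map (iterateFrobenius (MvPowerSeries (Fin 3) Fld) p (γ + c)) ≤ suppIdeal B := by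
    rw [Ideal.map_span, Set.image_insert_eq, Set.image_singleton, Ideal.span_le]
    rintro g (rfl | rfl)
    · show _ ∈ (suppIdeal B : Ideal (MvPowerSeries (Fin 3) Fld))
      rw [iterateFrobenius_def, xy_pow]
      exact monomial_mem_suppIdeal (Set.mem_insert _ _) 1
    · show _ ∈ (suppIdeal B : Ideal (MvPowerSeries (Fin 3) Fld))
      rw [iterateFrobenius_def, yz_pow]
      exact monomial_mem_suppIdeal (Set.mem_insert_of_mem _ (Set.mem_singleton _)) 1
  have key : ∀ w : MvPowerSeries (Fin 3) Fld, f * w ∈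
      (Ideal.span {X 0 * X 1, X 1 * X 2} : Ideal (MvPowerSeries (Fin 3) Fld)).map (iterateFrobenius (MvPowerSeries (Fin 3) Fld) p c) →
      iterateFrobenius (MvPowerSeries (Fin 3) Fld) p γ f * w ^ Q ∈ suppIdeal B := by
    intro w hw
    have heq : iterateFrobenius (MvPowerSeries (Fin 3) Fld) p γ f * w ^ Q
        = iterateFrobenius (MvPowerSeries (Fin 3) Fld) p γ (f * w) := by
      rw [map_mul]
      rfl
    rw [heq]
    refine hIB ?_
    rw [iterateFrobenius_add]
    rw [← Ideal.map_map]
    exact Ideal.mem_map_of_mem _ hw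
  have hg1 := key _ hf1
  have hg2 := key _ hf2
  rw [xy_pow] at hg1
  rw [yz_pow] at hg2
  rw [mem_suppIdeal_iff]
  intro d hd
  obtain ⟨a1, ha1, hle1⟩ := shift_bound hg1 hd
  obtain ⟨a2, ha2, hle2⟩ := shift_bound hg2 hd
  rw [hB] at ha1 ha2
  rcases ha2 with rfl | rfl
  · -- a2 = vec P P 0 : P ≤ d 0
    have h2 := vec_le_iff.mp hle2
    simp only [Finsupp.add_apply, vec_apply_zero, vec_apply_one, vec_apply_two] at h2
    refine ⟨vec P (P - Q) 0, Set.mem_insert _ _, vec_le_iff.mpr ?_⟩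
    refine ⟨by omega, by omega, by omega⟩
  · rcases ha1 with rfl | rfl
    · -- a1 = vec P P 0, a2 = vec 0 P P : middle element
      have h1 := vec_le_iff.mp hle1
      have h2 := vec_le_iff.mp hle2
      simp only [Finsupp.add_apply, vec_apply_zero, vec_apply_one, vec_apply_two] at h1 h2
      refine ⟨vec (P - Q) (P - Q) (P - Q), Set.mem_insert_of_mem _ (Set.mem_insert _ _),
        vec_le_iff.mpr ⟨by omega, by omega, by omega⟩⟩
    · -- a1 = vec 0 P P, a2 = vec 0 P P : third element
      have h1 := vec_le_iff.mp hle1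
      simp only [Finsupp.add_apply, vec_apply_zero, vec_apply_one, vec_apply_two] at h1
      refine ⟨vec 0 (P - Q) P, Set.mem_insert_of_mem _ (Set.mem_insert_of_mem _ rfl),
        vec_le_iff.mpr ⟨by omega, by omega, by omega⟩⟩

end NotMemProdKAux

open NotMemProdKAux

/-- In `R = K⟦x,y,z⟧` of prime characteristic `p`, with `I = (xy, yz)` and
`K c = (I^[p^c] : I)`, the monomial `x^(p^e) y^(p^e-1)` is not in the product
`K β₁ * (K β₂)^[p^β₁] * ⋯ * (K βₛ)^[p^(β₁+⋯+βₛ₋₁)]` whenever `s ≥ 2`,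
`1 ≤ βᵢ < e` for all `i`, and `β₁ + ⋯ + βₛ = e`. -/
theorem not_mem_prod_K
    (Fld : Type*) [Field Fld] (p : ℕ) [Fact p.Prime] [CharP Fld p]
    (x y z : MvPowerSeries (Fin 3) Fld)
    (hx : x = X 0) (hy : y = X 1) (hz : z = X 2)
    (I : Ideal (MvPowerSeries (Fin 3) Fld)) (hI : I = Ideal.span {x * y, y * z})
    (K : ℕ → Ideal (MvPowerSeries (Fin 3) Fld))
    (hK : ∀ c, K c = (I.map (iterateFrobenius (MvPowerSeries (Fin 3) Fld) p c)).colon I)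
    (e : ℕ) (he : 1 ≤ e)
    (s : ℕ) (hs : 2 ≤ s) (β : ℕ → ℕ) (hβ : ∀ i < s, 1 ≤ β i ∧ β i < e)
    (hsum : ∑ i ∈ Finset.range s, β i = e) :
    x ^ p ^ e * y ^ (p ^ e - 1) ∉
      ∏ i ∈ Finset.range s,
        (K (β i)).map (iterateFrobenius (MvPowerSeries (Fin 3) Fld) p
          (∑ j ∈ Finset.range i, β j)) := by
  subst hx hy hz hI
  intro hmem
  have hp : 2 ≤ p := (Fact.out : p.Prime).two_le
  -- notation
  set S : ℕ → ℕ := fun i => ∑ j ∈ Finset.range i, β j with hS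
  set Q : ℕ → ℕ := fun i => p ^ S i with hQ
  set P : ℕ → ℕ := fun i => p ^ (S i + β i) with hP
  set D : ℕ → Set (Fin 3 →₀ ℕ) := fun i =>
    {vec (P i) (P i - Q i) 0, vec (P i - Q i) (P i - Q i) (P i - Q i),
      vec 0 (P i - Q i) (P i)} with hD
  -- each factor is bounded by a monomial support ideal
  have hA : ∀ i < s, (K (β i)).map (iterateFrobenius (MvPowerSeries (Fin 3) Fld) p (S i))
      ≤ suppIdeal (D i) := by
    intro i hi
    rw [Ideal.map_le_iff_le_comap]
    intro f hf
    rw [hK] at hf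
    have hxy : f * (X 0 * X 1) ∈
        (Ideal.span {X 0 * X 1, X 1 * X 2} : Ideal (MvPowerSeries (Fin 3) Fld)).map
          (iterateFrobenius (MvPowerSeries (Fin 3) Fld) p (β i)) := by
      have := Submodule.mem_colon.mp hf (X 0 * X 1) (Ideal.subset_span (Set.mem_insert _ _))
      rwa [smul_eq_mul] at this
    have hyz : f * (X 1 * X 2) ∈
        (Ideal.span {X 0 * X 1, X 1 * X 2} : Ideal (MvPowerSeries (Fin 3) Fld)).map
          (iterateFrobenius (MvPowerSeries (Fin 3) Fld) p (β i)) := by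
      have := Submodule.mem_colon.mp hf (X 1 * X 2)
        (Ideal.subset_span (Set.mem_insert_of_mem _ (Set.mem_singleton _)))
      rwa [smul_eq_mul] at this
    exact mapK_bound p (β i) (S i) (hβ i hi).1 f hxy hyz
  -- the monomial we are testing
  have hmono : (X 0 : MvPowerSeries (Fin 3) Fld) ^ p ^ e * (X 1) ^ (p ^ e - 1)
      = monomial (vec (p ^ e) (p ^ e - 1) 0) 1 := x_pow_mul_y_pow _ _
  have hcoeff : coeff (vec (p ^ e) (p ^ e - 1) 0)
      ((X 0 : MvPowerSeries (Fin 3) Fld) ^ p ^ e * (X 1) ^ (p ^ e - 1)) ≠ 0 := by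
    rw [hmono, coeff_monomial_same]
    exact one_ne_zero
  obtain ⟨a, ha, hale⟩ := prod_bound _ _ s hA _ hmem _ hcoeff
  -- third coordinates are all zero
  have hz2 : ∀ i ∈ Finset.range s, (a i) 2 = 0 := by
    have h2 := Finsupp.le_def.mp hale 2
    rw [Finsupp.finset_sum_apply] at h2
    simp only [vec_apply_two, Nat.le_zero] at h2
    exact (Finset.sum_eq_zero_iff).mp h2
  -- hence every factor's exponent is the first option
  have hPQlt : ∀ i < s, Q i < P i := by
    intro i hi
    rw [hQ, hP]
    exact Nat.pow_lt_pow_right (by omega) (by have := (hβ i hi).1; omega)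
  have ha0 : ∀ i < s, (a i) 0 = P i := by
    intro i hi
    have hzero := hz2 i (Finset.mem_range.mpr hi)
    have hPQ := hPQlt i hi
    have hQpos : 0 < Q i := pow_pos (by omega) _
    rcases ha i hi with h | h | h
    · rw [h]; simp
    · rw [h] at hzero; rw [vec_apply_two] at hzero; omega
    · rw [h] at hzero; rw [vec_apply_two] at hzero; omega
  -- first coordinate bound
  have hx0 : ∑ i ∈ Finset.range s, P i ≤ p ^ e := by
    have h0 := Finsupp.le_def.mp hale 0
    rw [Finsupp.finset_sum_apply] at h0
    rw [vec_apply_zero] at h0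
    calc ∑ i ∈ Finset.range s, P i = ∑ i ∈ Finset.range s, (a i) 0 :=
          Finset.sum_congr rfl fun i hi => (ha0 i (Finset.mem_range.mp hi)).symm
      _ ≤ p ^ e := h0
  -- but the last factor alone contributes `p ^ e`, and the first one is positive
  have hexp : S (s - 1) + β (s - 1) = e := by
    have h1 := Finset.sum_range_succ β (s - 1)
    rw [(by omega : s - 1 + 1 = s)] at h1
    simp only [hS]
    omega
  have hlast : P (s - 1) = p ^ e := by
    simp only [hP]
    rw [hexp]
  have hfirst : 1 ≤ P 0 := Nat.one_le_pow _ _ (by omega)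
  have h0mem : 0 ∈ Finset.range s := Finset.mem_range.mpr (by omega)
  have hsplit := Finset.add_sum_erase (Finset.range s) P h0mem
  have hlastmem : s - 1 ∈ (Finset.range s).erase 0 := by
    rw [Finset.mem_erase]
    exact ⟨by omega, Finset.mem_range.mpr (by omega)⟩
  have hge := Finset.single_le_sum (f := P) (fun i _ => Nat.zero_le _) hlastmem
  have hcontr : P 0 + P (s - 1) ≤ ∑ i ∈ Finset.range s, P i := by
    calc P 0 + P (s - 1) ≤ P 0 + ∑ i ∈ (Finset.range s).erase 0, P i :=
          Nat.add_le_add_left hge _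
      _ = ∑ i ∈ Finset.range s, P i := hsplit
  have hfin := hcontr.trans hx0
  rw [hlast] at hfin
  omega
end

section
/- Let $\mathbb{K}$ be a field of prime characteristic $p$, let $R = \mathbb{K}[\![x, y, z]\!]$ be the formal power series ring in three variables, let $I = (xy, yz)$, and for $c \geq 1$ write $K_c = (I^{[p^c]} : I)$. For $e \geq 1$ define $L_e = \sum K_{\beta_1} \cdot K_{\beta_2}^{[p^{\beta_1}]} \cdot K_{\beta_3}^{[p^{\beta_1+\beta_2}]} \cdots K_{\beta_s}^{[p^{\beta_1 + \dots + \beta_{s-1}}]}$, the sum ranging over all $s \geq 1$ and all tuples of integers $\beta_1, \dots, \beta_s$ with $1 \leq \beta_i < e$ for all $i$ and $\beta_1 + \dots + \beta_s = e$. Then for every $e \geq 1$, the element $x^{p^e} y^{p^e - 1}$ belongs to $K_e$ but not to $L_e$; in particular $K_e \not\subseteq L_e$. -/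
open MvPowerSeries Finsupp

section WdegAux

variable {Fld : Type*} [Field Fld]

/-- The ideal of power series in `K⟦x,y,z⟧` all of whose monomials `x^a y^b z^c`
satisfy `a + c ≥ n`. -/
def Wdeg (Fld : Type*) [Field Fld] (n : ℕ) : Ideal (MvPowerSeries (Fin 3) Fld) where
  carrier := {f | ∀ m : Fin 3 →₀ ℕ, coeff (R := Fld) m f ≠ 0 → n ≤ m 0 + m 2}
  zero_mem' := by intro m hm; simp at hm
  add_mem' := by
    intro a b ha hb m hm
    rw [map_add] at hm
    by_cases h : coeff (R := Fld) m a = 0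
    · rw [h, zero_add] at hm; exact hb m hm
    · exact ha m h
  smul_mem' := by
    classical
    intro r f hf m hm
    rw [smul_eq_mul, coeff_mul] at hm
    obtain ⟨q, hq, hne⟩ := Finset.exists_ne_zero_of_sum_ne_zero hm
    have h2 := hf q.2 (right_ne_zero_of_mul hne)
    have hqm : q.1 + q.2 = m := Finset.HasAntidiagonal.mem_antidiagonal.mp hq
    have h0 : m 0 = q.1 0 + q.2 0 := by rw [← hqm]; simp
    have h3 : m 2 = q.1 2 + q.2 2 := by rw [← hqm]; simp
    omega

lemma mem_Wdeg {n : ℕ} {f : MvPowerSeries (Fin 3) Fld} :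
    f ∈ Wdeg Fld n ↔ ∀ m : Fin 3 →₀ ℕ, coeff (R := Fld) m f ≠ 0 → n ≤ m 0 + m 2 := Iff.rfl

lemma Wdeg_anti {a b : ℕ} (h : a ≤ b) : Wdeg Fld b ≤ Wdeg Fld a := by
  intro f hf m hm
  exact le_trans h (hf m hm)

lemma Wdeg_mul {a b : ℕ} {f g : MvPowerSeries (Fin 3) Fld}
    (hf : f ∈ Wdeg Fld a) (hg : g ∈ Wdeg Fld b) : f * g ∈ Wdeg Fld (a + b) := by
  classical
  intro m hm
  rw [coeff_mul] at hm
  obtain ⟨q, hq, hne⟩ := Finset.exists_ne_zero_of_sum_ne_zero hm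
  have h1 := hf q.1 (left_ne_zero_of_mul hne)
  have h2 := hg q.2 (right_ne_zero_of_mul hne)
  have hqm : q.1 + q.2 = m := Finset.HasAntidiagonal.mem_antidiagonal.mp hq
  have h0 : m 0 = q.1 0 + q.2 0 := by rw [← hqm]; simp
  have h3 : m 2 = q.1 2 + q.2 2 := by rw [← hqm]; simp
  omega

lemma Wdeg_pow {a : ℕ} {f : MvPowerSeries (Fin 3) Fld} (hf : f ∈ Wdeg Fld a) (k : ℕ) :
    f ^ k ∈ Wdeg Fld (k * a) := by
  induction k with
  | zero => intro m _; rw [Nat.zero_mul]; exact Nat.zero_le _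
  | succ k ih =>
      rw [pow_succ, Nat.succ_mul]
      exact Wdeg_mul ih hf

lemma Wdeg_map_frob (p : ℕ) [Fact p.Prime] [CharP Fld p] {a : ℕ}
    {J : Ideal (MvPowerSeries (Fin 3) Fld)} (hJ : J ≤ Wdeg Fld a) (t : ℕ) :
    J.map (iterateFrobenius (MvPowerSeries (Fin 3) Fld) p t) ≤ Wdeg Fld (p ^ t * a) := by
  rw [Ideal.map_le_iff_le_comap]
  intro f hf
  have : iterateFrobenius (MvPowerSeries (Fin 3) Fld) p t f = f ^ p ^ t :=
    iterateFrobenius_def _ _ _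
  exact Ideal.mem_comap.mpr (this ▸ Wdeg_pow (hJ hf) (p ^ t))

lemma Wdeg_prod {s : ℕ} {T : ℕ → Ideal (MvPowerSeries (Fin 3) Fld)} {n : ℕ → ℕ}
    (h : ∀ i < s, T i ≤ Wdeg Fld (n i)) :
    ∏ i ∈ Finset.range s, T i ≤ Wdeg Fld (∑ i ∈ Finset.range s, n i) := by
  induction s with
  | zero =>
      intro f _ m _
      simp
  | succ s ih =>
      rw [Finset.prod_range_succ, Finset.sum_range_succ]
      refine Ideal.mul_le.mpr fun r hr t ht => ?_
      exact Wdeg_mul (ih (fun i hi => h i (by omega)) hr) (h s (by omega) ht)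

lemma le_of_coeff_mul_monomial_ne_zero {f : MvPowerSeries (Fin 3) Fld} {d m : Fin 3 →₀ ℕ}
    (h : coeff (R := Fld) m (f * monomial (R := Fld) d 1) ≠ 0) : d ≤ m := by
  by_contra hc
  rw [coeff_mul_monomial, if_neg hc] at h
  exact h rfl

lemma support_of_mem_span_pair {d₁ d₂ : Fin 3 →₀ ℕ} {f : MvPowerSeries (Fin 3) Fld}
    (hf : f ∈ Ideal.span {monomial (R := Fld) d₁ 1, monomial (R := Fld) d₂ 1})
    {m : Fin 3 →₀ ℕ} (hm : coeff (R := Fld) m f ≠ 0) : d₁ ≤ m ∨ d₂ ≤ m := by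
  obtain ⟨a, b, hab⟩ := Ideal.mem_span_pair.mp hf
  rw [← hab, map_add] at hm
  by_cases h : coeff (R := Fld) m (a * monomial (R := Fld) d₁ 1) = 0
  · rw [h, zero_add] at hm
    exact Or.inr (le_of_coeff_mul_monomial_ne_zero hm)
  · exact Or.inl (le_of_coeff_mul_monomial_ne_zero h)


lemma X_pow_mul_X_pow (s t : Fin 3) (a b : ℕ) :
    (X s : MvPowerSeries (Fin 3) Fld) ^ a * X t ^ b =
      monomial (R := Fld) (single s a + single t b) 1 := by
  rw [X_pow_eq, X_pow_eq, monomial_mul_monomial, one_mul]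

end WdegAux

/-- In `R = K⟦x,y,z⟧` of prime characteristic `p`, with `I = (xy, yz)`,
`K c = (I^[p^c] : I)` and
`L e = Σ K β₁ * (K β₂)^[p^β₁] * ⋯ * (K βₛ)^[p^(β₁+⋯+βₛ₋₁)]`, the sum ranging over all
`s ≥ 1` and all tuples `β₁, …, βₛ` with `1 ≤ βᵢ < e` and `β₁ + ⋯ + βₛ = e`, the monomial
`x^(p^e) y^(p^e-1)` lies in `K e` but not in `L e`; in particular `¬ K e ≤ L e`. -/
theorem Ke_not_le_Le
    (Fld : Type*) [Field Fld] (p : ℕ) [Fact p.Prime] [CharP Fld p]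
    (x y z : MvPowerSeries (Fin 3) Fld)
    (hx : x = X 0) (hy : y = X 1) (hz : z = X 2)
    (I : Ideal (MvPowerSeries (Fin 3) Fld)) (hI : I = Ideal.span {x * y, y * z})
    (K : ℕ → Ideal (MvPowerSeries (Fin 3) Fld))
    (hK : ∀ c, K c = (I.map (iterateFrobenius (MvPowerSeries (Fin 3) Fld) p c)).colon I)
    (L : ℕ → Ideal (MvPowerSeries (Fin 3) Fld))
    (hL : ∀ e, L e =
      ⨆ (s : ℕ) (_ : 1 ≤ s) (β : ℕ → ℕ)
        (_ : (∀ i < s, 1 ≤ β i ∧ β i < e) ∧ ∑ i ∈ Finset.range s, β i = e),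
        ∏ i ∈ Finset.range s,
          (K (β i)).map (iterateFrobenius (MvPowerSeries (Fin 3) Fld) p
            (∑ j ∈ Finset.range i, β j)))
    (e : ℕ) (he : 1 ≤ e) :
    x ^ p ^ e * y ^ (p ^ e - 1) ∈ K e ∧
      x ^ p ^ e * y ^ (p ^ e - 1) ∉ L e ∧
      ¬ K e ≤ L e := by
  have hp2 : 2 ≤ p := (Fact.out : p.Prime).two_le
  -- the Frobenius power of `I`, in two forms
  have hJ0 : ∀ c, I.map (iterateFrobenius (MvPowerSeries (Fin 3) Fld) p c) =
      Ideal.span {(x * y) ^ p ^ c, (y * z) ^ p ^ c} := by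
    intro c
    rw [hI, Ideal.map_span, Set.image_pair]
    simp only [iterateFrobenius_def]
  have hJ : ∀ c, I.map (iterateFrobenius (MvPowerSeries (Fin 3) Fld) p c) =
      Ideal.span {monomial (R := Fld) (single 0 (p ^ c) + single 1 (p ^ c)) 1,
        monomial (R := Fld) (single 1 (p ^ c) + single 2 (p ^ c)) 1} := by
    intro c
    rw [hJ0 c, hx, hy, hz, mul_pow, mul_pow, X_pow_mul_X_pow, X_pow_mul_X_pow]
  -- Claim A : K c ⊆ Wdeg (p^c) for c ≥ 1
  have claimA : ∀ c, 1 ≤ c → K c ≤ Wdeg Fld (p ^ c) := by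
    intro c hc u hu
    have hq2 : 2 ≤ p ^ c := le_trans hp2 (Nat.le_self_pow (by omega) p)
    rw [hK c] at hu
    have h1 : u * (x * y) ∈ Ideal.span
        {monomial (R := Fld) (single 0 (p ^ c) + single 1 (p ^ c)) (1 : Fld),
          monomial (R := Fld) (single 1 (p ^ c) + single 2 (p ^ c)) 1} := by
      rw [← hJ c]
      have := Submodule.mem_colon.mp hu (x * y)
        (by rw [hI]; exact Ideal.subset_span (Set.mem_insert _ _))
      rwa [smul_eq_mul] at this
    have h2 : u * (y * z) ∈ Ideal.span
        {monomial (R := Fld) (single 0 (p ^ c) + single 1 (p ^ c)) (1 : Fld),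
          monomial (R := Fld) (single 1 (p ^ c) + single 2 (p ^ c)) 1} := by
      rw [← hJ c]
      have := Submodule.mem_colon.mp hu (y * z)
        (by rw [hI]; exact Ideal.subset_span (Set.mem_insert_of_mem _ rfl))
      rwa [smul_eq_mul] at this
    intro m hm
    -- from `u * x * y`
    have hxy : x * y = monomial (R := Fld) (single 0 1 + single 1 1) 1 := by
      rw [hx, hy, ← pow_one (X 0 : MvPowerSeries (Fin 3) Fld),
        ← pow_one (X 1 : MvPowerSeries (Fin 3) Fld), X_pow_mul_X_pow]
    have hyz : y * z = monomial (R := Fld) (single 1 1 + single 2 1) 1 := by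
      rw [hy, hz, ← pow_one (X 1 : MvPowerSeries (Fin 3) Fld),
        ← pow_one (X 2 : MvPowerSeries (Fin 3) Fld), X_pow_mul_X_pow]
    have c1 : coeff (R := Fld) (m + (single 0 1 + single 1 1)) (u * (x * y)) ≠ 0 := by
      rw [hxy, coeff_add_mul_monomial, mul_one]; exact hm
    have c2 : coeff (R := Fld) (m + (single 1 1 + single 2 1)) (u * (y * z)) ≠ 0 := by
      rw [hyz, coeff_add_mul_monomial, mul_one]; exact hm
    have d1 := support_of_mem_span_pair h1 c1
    have d2 := support_of_mem_span_pair h2 c2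
    have e1 : p ^ c ≤ m 0 + 1 ∨ p ^ c ≤ m 2 := by
      rcases d1 with h | h
      · left
        have := Finsupp.le_def.mp h 0
        simpa using this
      · right
        have := Finsupp.le_def.mp h 2
        simpa using this
    have e2 : p ^ c ≤ m 0 ∨ p ^ c ≤ m 2 + 1 := by
      rcases d2 with h | h
      · left
        have := Finsupp.le_def.mp h 0
        simpa using this
      · right
        have := Finsupp.le_def.mp h 2
        simpa using this
    omega
  -- Part 1 : membership in K e
  have part1 : x ^ p ^ e * y ^ (p ^ e - 1) ∈ K e := by
    rw [hK e]
    rw [Submodule.mem_colon]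
    intro v hv
    rw [hI] at hv
    obtain ⟨a, b, hab⟩ := Ideal.mem_span_pair.mp hv
    rw [smul_eq_mul, ← hab, hJ0 e]
    obtain ⟨q', hq'⟩ : ∃ q', p ^ e = q' + 1 :=
      ⟨p ^ e - 1, by have := Nat.one_le_pow e p (by omega); omega⟩
    have key : x ^ p ^ e * y ^ (p ^ e - 1) * (a * (x * y) + b * (y * z)) =
        (a * x + b * z) * (x * y) ^ p ^ e := by
      rw [hq']; simp only [Nat.add_sub_cancel]; ring
    rw [key]
    exact Ideal.mul_mem_left _ _ (Ideal.subset_span (Set.mem_insert _ _))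
  -- Claim B : L e ⊆ Wdeg (p^e + 1)
  have claimB : L e ≤ Wdeg Fld (p ^ e + 1) := by
    rw [hL e]
    refine iSup_le fun s => iSup_le fun hs => iSup_le fun β => iSup_le fun hβc => ?_
    obtain ⟨hβ, hsum⟩ := hβc
    have hterm : ∀ i < s,
        (K (β i)).map (iterateFrobenius (MvPowerSeries (Fin 3) Fld) p
          (∑ j ∈ Finset.range i, β j)) ≤
        Wdeg Fld (p ^ (∑ j ∈ Finset.range i, β j) * p ^ β i) := fun i hi =>
      Wdeg_map_frob p (claimA (β i) (hβ i hi).1) _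
    refine le_trans (Wdeg_prod hterm) (Wdeg_anti ?_)
    have hform : ∀ i ∈ Finset.range s,
        p ^ (∑ j ∈ Finset.range i, β j) * p ^ β i =
          p ^ (∑ j ∈ Finset.range (i + 1), β j) := by
      intro i _
      rw [← pow_add, Finset.sum_range_succ]
    rw [Finset.sum_congr rfl hform]
    obtain ⟨t, ht⟩ : ∃ t, s = t + 2 := by
      rcases s with _ | _ | t
      · omega
      · exfalso
        have h0 := hβ 0 (by omega)
        have hb0 : β 0 = e := by simpa using hsum
        omega
      · exact ⟨t, rfl⟩
    subst ht
    rw [Finset.sum_range_succ]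
    have hlastexp : ∑ j ∈ Finset.range (t + 1 + 1), β j = e := hsum
    rw [hlastexp]
    have h1 : p ≤ p ^ (∑ j ∈ Finset.range (t + 1), β j) := by
      have hge : 1 ≤ ∑ j ∈ Finset.range (t + 1), β j :=
        le_trans (hβ 0 (by omega)).1
          (Finset.single_le_sum (f := β) (fun i _ => Nat.zero_le _)
            (Finset.mem_range.mpr (by omega)))
      calc p = p ^ 1 := (pow_one p).symm
        _ ≤ p ^ (∑ j ∈ Finset.range (t + 1), β j) :=
          Nat.pow_le_pow_right (by omega) hge
    have h2 : p ^ (∑ j ∈ Finset.range (t + 1), β j) ≤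
        ∑ i ∈ Finset.range (t + 1), p ^ (∑ j ∈ Finset.range (i + 1), β j) :=
      Finset.single_le_sum (f := fun i => p ^ (∑ j ∈ Finset.range (i + 1), β j))
        (fun i _ => Nat.zero_le _) (Finset.mem_range.mpr (by omega))
    omega
  -- Part 2 : non-membership
  have part2 : x ^ p ^ e * y ^ (p ^ e - 1) ∉ L e := by
    intro hmem
    have h := claimB hmem
    have hxmon : x ^ p ^ e * y ^ (p ^ e - 1) =
        monomial (R := Fld) (single 0 (p ^ e) + single 1 (p ^ e - 1)) 1 := by
      rw [hx, hy, X_pow_mul_X_pow]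
    have hc : coeff (R := Fld) (single 0 (p ^ e) + single 1 (p ^ e - 1))
        (x ^ p ^ e * y ^ (p ^ e - 1)) ≠ 0 := by
      rw [hxmon, coeff_monomial_same]; exact one_ne_zero
    have hle := h _ hc
    have h0 : ((single 0 (p ^ e) + single 1 (p ^ e - 1) : Fin 3 →₀ ℕ)) 0 = p ^ e := by
      simp [Finsupp.single_apply]
    have h22 : ((single 0 (p ^ e) + single 1 (p ^ e - 1) : Fin 3 →₀ ℕ)) 2 = 0 := by
      simp [Finsupp.single_apply]
    rw [h0, h22] at hle
    omega
  exact ⟨part1, part2, fun hle => part2 (hle part1)⟩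
end
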